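/- Let M₁, M₂ be ITL^e models and Z_n ⊆ ⋯ ⊆ Z_0 a bounded □-bisimulation. Then for all i ≤ n, if w₁ Z_i w₂, then for every formula φ in the language with atoms, ⊥, ∧, ∨, →, ◯, □ of length |φ| ≤ i: M₁, w₁ ⊨ φ iff M₂, w₂ ⊨ φ. -/
import Mathlib


inductive TForm : Type where
  | atom : ℕ → TForm
  | bot : TForm
  | and : TForm → TForm → TForm
  | or : TForm → TForm → TForm
  | imp : TForm → TForm → TForm
  | next : TForm → TForm
  | dia : TForm → TForm
  | box : TForm → TForm
  | untl : TForm → TForm → TForm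
  | rels : TForm → TForm → TForm

/-- Intuitionistic temporal satisfaction over a dynamic poset `(W, ≤, S)`
with valuation `V`. -/
def sat {W : Type} [PartialOrder W] (S : W → W) (V : W → ℕ → Prop) : TForm → W → Prop
  | .atom p, w => V w p
  | .bot, _ => False
  | .and φ ψ, w => sat S V φ w ∧ sat S V ψ w
  | .or φ ψ, w => sat S V φ w ∨ sat S V ψ w
  | .imp φ ψ, w => ∀ v, w ≤ v → sat S V φ v → sat S V ψ v
  | .next φ, w => sat S V φ (S w)
  | .dia φ, w => ∃ k, sat S V φ (S^[k] w)
  | .box φ, w => ∀ k, sat S V φ (S^[k] w)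
  | .untl φ ψ, w => ∃ k, sat S V ψ (S^[k] w) ∧ ∀ i < k, sat S V φ (S^[i] w)
  | .rels φ ψ, w => ∀ k, sat S V ψ (S^[k] w) ∨ ∃ i < k, sat S V φ (S^[i] w)

/-- The length (number of connectives) of a formula. -/
def len : TForm → ℕ
  | .atom _ => 0
  | .bot => 0
  | .and φ ψ => 1 + len φ + len ψ
  | .or φ ψ => 1 + len φ + len ψ
  | .imp φ ψ => 1 + len φ + len ψ
  | .next φ => 1 + len φ
  | .dia φ => 1 + len φ
  | .box φ => 1 + len φ
  | .untl φ ψ => 1 + len φ + len ψ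
  | .rels φ ψ => 1 + len φ + len ψ

/-- Formulas using only the connectives ⊥, ∧, ∨, →, and {next, box}. -/
def LangBox : TForm → Prop
  | .atom _ => True
  | .bot => True
  | .and φ ψ => LangBox φ ∧ LangBox ψ
  | .or φ ψ => LangBox φ ∧ LangBox ψ
  | .imp φ ψ => LangBox φ ∧ LangBox ψ
  | .next φ => LangBox φ
  | .dia _ => False
  | .box φ => LangBox φ
  | .untl _ _ => False
  | .rels _ _ => False

lemma iter_mono {W : Type} [PartialOrder W] (S : W → W)
    (hS : ∀ w v : W, w ≤ v → S w ≤ S v) :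
    ∀ k (w v : W), w ≤ v → S^[k] w ≤ S^[k] v := by
  intro k
  induction k with
  | zero => intro w v h; simpa using h
  | succ k ih =>
    intro w v h
    rw [Function.iterate_succ_apply', Function.iterate_succ_apply']
    exact hS _ _ (ih w v h)

lemma sat_mono {W : Type} [PartialOrder W] (S : W → W) (V : W → ℕ → Prop)
    (hS : ∀ w v : W, w ≤ v → S w ≤ S v)
    (hV : ∀ w v : W, w ≤ v → ∀ p, V w p → V v p) :
    ∀ φ (w v : W), w ≤ v → sat S V φ w → sat S V φ v := by
  intro φ
  induction φ with
  | atom p => intro w v h hw; exact hV w v h p hw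
  | bot => intro w v h hw; exact hw
  | and φ ψ ihφ ihψ => intro w v h hw; exact ⟨ihφ w v h hw.1, ihψ w v h hw.2⟩
  | or φ ψ ihφ ihψ =>
    intro w v h hw
    rcases hw with hw | hw
    · exact Or.inl (ihφ w v h hw)
    · exact Or.inr (ihψ w v h hw)
  | imp φ ψ ihφ ihψ =>
    intro w v h hw u hu hφ
    exact hw u (le_trans h hu) hφ
  | next φ ih => intro w v h hw; exact ih _ _ (hS w v h) hw
  | dia φ ih =>
    intro w v h hw
    obtain ⟨k, hk⟩ := hw
    exact ⟨k, ih _ _ (iter_mono S hS k w v h) hk⟩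
  | box φ ih =>
    intro w v h hw k
    exact ih _ _ (iter_mono S hS k w v h) (hw k)
  | untl φ ψ ihφ ihψ =>
    intro w v h hw
    obtain ⟨k, hk, hlt⟩ := hw
    exact ⟨k, ihψ _ _ (iter_mono S hS k w v h) hk,
      fun i hi => ihφ _ _ (iter_mono S hS i w v h) (hlt i hi)⟩
  | rels φ ψ ihφ ihψ =>
    intro w v h hw k
    rcases hw k with hk | ⟨i, hi, hφ⟩
    · exact Or.inl (ihψ _ _ (iter_mono S hS k w v h) hk)
    · exact Or.inr ⟨i, hi, ihφ _ _ (iter_mono S hS i w v h) hφ⟩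

/-- Bounded □-bisimulations preserve □-formulas of bounded length. -/
theorem box_bisim_invariance {W₁ W₂ : Type} [PartialOrder W₁] [PartialOrder W₂]
    (S₁ : W₁ → W₁) (V₁ : W₁ → ℕ → Prop) (S₂ : W₂ → W₂) (V₂ : W₂ → ℕ → Prop)
    (hS₁ : ∀ w v : W₁, w ≤ v → S₁ w ≤ S₁ v)
    (hV₁ : ∀ w v : W₁, w ≤ v → ∀ p, V₁ w p → V₁ v p)
    (hS₂ : ∀ w v : W₂, w ≤ v → S₂ w ≤ S₂ v)
    (hV₂ : ∀ w v : W₂, w ≤ v → ∀ p, V₂ w p → V₂ v p)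
    (n : ℕ) (hn : 0 < n) (Z : ℕ → W₁ → W₂ → Prop)
    (hchain : ∀ i < n, ∀ w₁ w₂, Z (i+1) w₁ w₂ → Z i w₁ w₂)
    (hatoms : ∀ i < n, ∀ w₁ w₂, Z i w₁ w₂ → ∀ p, V₁ w₁ p ↔ V₂ w₂ p)
    (hforth_imp : ∀ i < n, ∀ w₁ w₂, Z (i+1) w₁ w₂ →
      ∀ v₁, w₁ ≤ v₁ → ∃ v₂, w₂ ≤ v₂ ∧ Z i v₁ v₂)
    (hback_imp : ∀ i < n, ∀ w₁ w₂, Z (i+1) w₁ w₂ →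
      ∀ v₂, w₂ ≤ v₂ → ∃ v₁, w₁ ≤ v₁ ∧ Z i v₁ v₂)
    (hnext : ∀ i < n, ∀ w₁ w₂, Z (i+1) w₁ w₂ → Z i (S₁ w₁) (S₂ w₂))
    (hforth_box : ∀ i < n, ∀ w₁ w₂, Z (i+1) w₁ w₂ → ∀ k₂ : ℕ, ∃ k₁ : ℕ, ∃ v₁ v₂,
      v₂ ≤ S₂^[k₂] w₂ ∧ S₁^[k₁] w₁ ≤ v₁ ∧ Z i v₁ v₂)
    (hback_box : ∀ i < n, ∀ w₁ w₂, Z (i+1) w₁ w₂ → ∀ k₁ : ℕ, ∃ k₂ : ℕ, ∃ v₁ v₂,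
      v₁ ≤ S₁^[k₁] w₁ ∧ S₂^[k₂] w₂ ≤ v₂ ∧ Z i v₁ v₂) :
    ∀ i ≤ n, ∀ w₁ w₂, Z i w₁ w₂ → ∀ φ, LangBox φ → len φ ≤ i →
      (sat S₁ V₁ φ w₁ ↔ sat S₂ V₂ φ w₂) := by
  intro i hi w₁ w₂ hZ φ
  induction φ generalizing i w₁ w₂ with
  | atom p =>
    intro _ _
    simp only [sat]
    rcases lt_or_eq_of_le hi with h | h
    · exact hatoms i h _ _ hZ p
    · have e : i - 1 + 1 = i := by omega
      have hZ' : Z (i - 1) w₁ w₂ := hchain (i - 1) (by omega) _ _ (by rw [e]; exact hZ)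
      exact hatoms (i - 1) (by omega) _ _ hZ' p
  | bot => intro _ _; simp [sat]
  | and φ ψ ihφ ihψ =>
    intro hL hlen
    simp only [sat]
    rw [ihφ i hi _ _ hZ hL.1 (by simp [len] at hlen; omega),
        ihψ i hi _ _ hZ hL.2 (by simp [len] at hlen; omega)]
  | or φ ψ ihφ ihψ =>
    intro hL hlen
    simp only [sat]
    rw [ihφ i hi _ _ hZ hL.1 (by simp [len] at hlen; omega),
        ihψ i hi _ _ hZ hL.2 (by simp [len] at hlen; omega)]
  | imp φ ψ ihφ ihψ =>
    intro hL hlen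
    obtain ⟨j, rfl⟩ : ∃ j, i = j + 1 := ⟨i - 1, by simp [len] at hlen; omega⟩
    have hj : j < n := by omega
    have hφlen : len φ ≤ j := by simp [len] at hlen; omega
    have hψlen : len ψ ≤ j := by simp [len] at hlen; omega
    simp only [sat]
    constructor
    · intro h v₂ hv₂ hφ
      obtain ⟨v₁, hv₁, hZ'⟩ := hback_imp j hj _ _ hZ v₂ hv₂
      exact (ihψ j (le_of_lt hj) _ _ hZ' hL.2 hψlen).mp
        (h v₁ hv₁ ((ihφ j (le_of_lt hj) _ _ hZ' hL.1 hφlen).mpr hφ))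
    · intro h v₁ hv₁ hφ
      obtain ⟨v₂, hv₂, hZ'⟩ := hforth_imp j hj _ _ hZ v₁ hv₁
      exact (ihψ j (le_of_lt hj) _ _ hZ' hL.2 hψlen).mpr
        (h v₂ hv₂ ((ihφ j (le_of_lt hj) _ _ hZ' hL.1 hφlen).mp hφ))
  | next φ ih =>
    intro hL hlen
    obtain ⟨j, rfl⟩ : ∃ j, i = j + 1 := ⟨i - 1, by simp [len] at hlen; omega⟩
    have hj : j < n := by omega
    simp only [sat]
    exact ih j (le_of_lt hj) _ _ (hnext j hj _ _ hZ) hL (by simp [len] at hlen; omega)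
  | dia φ ih => intro hL _; exact hL.elim
  | box φ ih =>
    intro hL hlen
    obtain ⟨j, rfl⟩ : ∃ j, i = j + 1 := ⟨i - 1, by simp [len] at hlen; omega⟩
    have hj : j < n := by omega
    have hφlen : len φ ≤ j := by simp [len] at hlen; omega
    simp only [sat]
    constructor
    · intro h k₂
      obtain ⟨k₁, v₁, v₂, hv₂, hv₁, hZ'⟩ := hforth_box j hj _ _ hZ k₂
      exact sat_mono S₂ V₂ hS₂ hV₂ φ v₂ _ hv₂
        ((ih j (le_of_lt hj) _ _ hZ' hL hφlen).mp
          (sat_mono S₁ V₁ hS₁ hV₁ φ _ v₁ hv₁ (h k₁)))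
    · intro h k₁
      obtain ⟨k₂, v₁, v₂, hv₁, hv₂, hZ'⟩ := hback_box j hj _ _ hZ k₁
      exact sat_mono S₁ V₁ hS₁ hV₁ φ v₁ _ hv₁
        ((ih j (le_of_lt hj) _ _ hZ' hL hφlen).mpr
          (sat_mono S₂ V₂ hS₂ hV₂ φ _ v₂ hv₂ (h k₂)))
  | untl φ ψ _ _ => intro hL _; exact hL.elim
  | rels φ ψ _ _ => intro hL _; exact hL.elim
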